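/- Let δ, κ, λ > 0, μ ≥ 0, let β be the unique solution in (0, ∞) of tanh(√(2δ)·β) = δ(2κβ − δ)/(κ√(2δ)), set A = −κ/(δ² cosh(√(2δ)β)), and define u : ℝ → ℝ by u(x) = A cosh(√(2δ)x) + (κ/δ)x² + (κ + δμ)/δ² for |x| ≤ β and u(x) = |x| − β + u(β) for |x| > β. Then u(x) > λx² for all |x| ≤ β if and only if one of the following holds: (i) δλ − κ < 0; (ii) δλ − κ = 0 and μ > 0; (iii) δλ − κ > 0 and tanh(√(2δμ/(δλ − κ))) < √(2δμ/(δλ − κ)) − δ²/(κ√(2δ)). Moreover, in that case the equation u(x) = λx² has a unique solution α in (β, ∞), and this solution satisfies α > 1/(2λ). -/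

import Mathlib

open Real Set

lemma myHasDerivAt_tanh (y : ℝ) : HasDerivAt Real.tanh (1/Real.cosh y^2) y := by
  have h := (Real.hasDerivAt_sinh y).div (Real.hasDerivAt_cosh y) (ne_of_gt (Real.cosh_pos y))
  have hfun : Real.tanh = fun x => Real.sinh x / Real.cosh x := funext fun x => Real.tanh_eq_sinh_div_cosh x
  rw [hfun]
  have e : (1:ℝ)/Real.cosh y^2 = (Real.cosh y * Real.cosh y - Real.sinh y * Real.sinh y) / Real.cosh y^2 := by
    have := Real.cosh_sq_sub_sinh_sq y
    rw [show Real.cosh y * Real.cosh y - Real.sinh y * Real.sinh y = 1 by nlinarith [this]]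
  rw [e]; exact h

lemma myTanhGap {a b : ℝ} (ha : 0 ≤ a) (hab : a < b) : Real.tanh b - Real.tanh a < b - a := by
  have H : StrictMonoOn (fun y => y - Real.tanh y) (Set.Ici 0) := by
    apply strictMonoOn_of_deriv_pos (convex_Ici 0)
    · have : Continuous fun y => y - Real.tanh y := by
        have hfun : Real.tanh = fun x => Real.sinh x / Real.cosh x :=
          funext fun x => Real.tanh_eq_sinh_div_cosh x
        rw [hfun]
        exact continuous_id.sub (Real.continuous_sinh.div Real.continuous_cosh
          (fun x => ne_of_gt (Real.cosh_pos x)))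
      exact this.continuousOn
    · intro x hx
      rw [interior_Ici, Set.mem_Ioi] at hx
      have hd : HasDerivAt (fun y => y - Real.tanh y) (1 - 1/Real.cosh x^2) x :=
        (hasDerivAt_id x).sub (myHasDerivAt_tanh x)
      rw [hd.deriv]
      have h1 : 1 < Real.cosh x := Real.one_lt_cosh.mpr (ne_of_gt hx)
      have : 1/Real.cosh x^2 < 1 := by
        rw [div_lt_one (by positivity)]; nlinarith
      linarith
  have := H (Set.mem_Ici.mpr ha) (Set.mem_Ici.mpr (ha.trans hab.le)) hab
  simp only at this; linarith

lemma myConvexSinh : ConvexOn ℝ (Set.Ici (0:ℝ)) Real.sinh := by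
  apply convexOn_of_deriv2_nonneg (convex_Ici 0) Real.continuous_sinh.continuousOn
    Real.differentiable_sinh.differentiableOn
  · rw [Real.deriv_sinh]; exact Real.differentiable_cosh.differentiableOn
  · intro x hx
    rw [interior_Ici, Set.mem_Ioi] at hx
    have : deriv^[2] Real.sinh = Real.sinh := by
      simp [Function.iterate_succ, Real.deriv_sinh, Real.deriv_cosh]
    rw [this]
    exact (Real.sinh_pos_iff.mpr hx).le

lemma mySinhBound {c x b : ℝ} (hx : 0 ≤ x) (hxb : x ≤ b) (hb : 0 < b) (hc : 0 ≤ c) :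
    Real.sinh (c*x) ≤ (x/b) * Real.sinh (c*b) := by
  have h0 : (0:ℝ) ∈ Set.Ici (0:ℝ) := Set.mem_Ici.mpr le_rfl
  have hb0 : c*b ∈ Set.Ici (0:ℝ) := Set.mem_Ici.mpr (by positivity)
  have ht : 0 ≤ x/b := by positivity
  have ht1 : 0 ≤ 1 - x/b := by
    have : x/b ≤ 1 := (div_le_one hb).mpr hxb
    linarith
  have := myConvexSinh.2 h0 hb0 ht1 ht (by ring)
  simp only [smul_eq_mul, Real.sinh_zero, mul_zero, zero_add] at this
  have harg : x/b*(c*b) = c*x := by field_simp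
  rw [harg] at this
  exact this

lemma myCoshBound {c x b : ℝ} (hx : 0 ≤ x) (hxb : x ≤ b) (hb : 0 < b) (hc : 0 ≤ c) :
    Real.cosh (c*x) ≤ 1 + (x/b)^2 * (Real.cosh (c*b) - 1) := by
  have key : ∀ y : ℝ, Real.cosh y = 2 * Real.sinh (y/2)^2 + 1 := by
    intro y
    have := Real.cosh_two_mul (y/2)
    have h2 : 2 * (y/2) = y := by ring
    rw [h2] at this
    rw [this, Real.cosh_sq]; ring
  rw [key (c*x), key (c*b)]
  have hs := mySinhBound hx hxb hb hc
  have hsn : 0 ≤ Real.sinh (c*x/2) := Real.sinh_nonneg_iff.mpr (by positivity)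
  have hs2 : Real.sinh (c/2*x) ≤ (x/b) * Real.sinh (c/2*b) := mySinhBound hx hxb hb (by positivity)
  have e1 : c*x/2 = c/2*x := by ring
  have e2 : c*b/2 = c/2*b := by ring
  rw [e1, e2]
  have hsn' : 0 ≤ Real.sinh (c/2*x) := Real.sinh_nonneg_iff.mpr (by positivity)
  nlinarith [hs2, hsn', sq_nonneg (x/b)]

open Real Set

set_option maxHeartbeats 1000000

theorem statement4 (δ κ lam μ β A : ℝ) (hδ : 0 < δ) (hκ : 0 < κ) (hlam : 0 < lam)
    (hμ : 0 ≤ μ) (hβ : 0 < β)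
    (heq : Real.tanh (Real.sqrt (2*δ) * β) = δ * (2*κ*β - δ) / (κ * Real.sqrt (2*δ)))
    (hA : A = -κ / (δ^2 * Real.cosh (Real.sqrt (2*δ) * β)))
    (u : ℝ → ℝ)
    (hu : ∀ x : ℝ, u x =
      if |x| ≤ β then A * Real.cosh (Real.sqrt (2*δ) * x) + (κ/δ) * x^2 + (κ + δ*μ)/δ^2
      else |x| - β + (A * Real.cosh (Real.sqrt (2*δ) * β) + (κ/δ) * β^2 + (κ + δ*μ)/δ^2)) :
    ((∀ x : ℝ, |x| ≤ β → lam * x^2 < u x) ↔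
      (δ*lam - κ < 0 ∨ (δ*lam - κ = 0 ∧ 0 < μ) ∨
        (0 < δ*lam - κ ∧
          Real.tanh (Real.sqrt (2*δ*μ/(δ*lam - κ))) <
            Real.sqrt (2*δ*μ/(δ*lam - κ)) - δ^2/(κ * Real.sqrt (2*δ))))) ∧
    ((∀ x : ℝ, |x| ≤ β → lam * x^2 < u x) →
      (∃! α : ℝ, β < α ∧ u α = lam * α^2) ∧
      (∀ α : ℝ, β < α → u α = lam * α^2 → 1/(2*lam) < α)) := by
  have h2δ : (0:ℝ) < 2*δ := by linarith
  set s := Real.sqrt (2*δ) with hsdef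
  have hs : 0 < s := Real.sqrt_pos.mpr h2δ
  have hs2 : s^2 = 2*δ := Real.sq_sqrt h2δ.le
  have hchpos : 0 < Real.cosh (s*β) := Real.cosh_pos _
  have hch : 1 < Real.cosh (s*β) := Real.one_lt_cosh.mpr (by positivity : 0 < s*β).ne'
  have hAch : A * Real.cosh (s*β) = -κ/δ^2 := by
    rw [hA]; field_simp
  have hAneg : A < 0 := by
    rw [hA]
    apply div_neg_of_neg_of_pos (by linarith) (by positivity)
  have hβabs : |β| ≤ β := le_of_eq (abs_of_pos hβ)
  have huβ : u β = (κ/δ)*β^2 + μ/δ := by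
    rw [hu β, if_pos hβabs, hAch]; field_simp; ring
  -- the key equivalence with the simple condition
  have hkey : (∀ x : ℝ, |x| ≤ β → lam * x^2 < u x) ↔ 0 < (κ - δ*lam)*β^2 + μ := by
    constructor
    · intro h
      have h1 := h β hβabs
      rw [huβ] at h1
      have e : (κ/δ)*β^2 + μ/δ = ((κ - δ*lam)*β^2 + μ)/δ + lam*β^2 := by field_simp; ring
      rw [e] at h1
      have h2 : 0 < ((κ - δ*lam)*β^2 + μ)/δ := by linarith
      rcases div_pos_iff.mp h2 with ⟨h3,_⟩|⟨_,h3⟩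
      · exact h3
      · linarith
    · intro hc x hx
      rw [hu x, if_pos hx]
      have hax : |x| ≤ β := hx
      have hcb0 := myCoshBound (abs_nonneg x) hax hβ hs.le
      have hcx : Real.cosh (s*|x|) = Real.cosh (s*x) := by
        rw [show s*|x| = |s*x| by rw [abs_mul, abs_of_pos hs], Real.cosh_abs]
      rw [hcx] at hcb0
      set t := (|x|/β)^2 with htdef
      have ht0 : 0 ≤ t := sq_nonneg _
      have ht1 : t ≤ 1 := by
        rw [htdef]
        have : |x|/β ≤ 1 := (div_le_one hβ).mpr hax
        nlinarith [abs_nonneg x, div_nonneg (abs_nonneg x) hβ.le]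
      have htx : t*β^2 = x^2 := by
        rw [htdef, div_pow, div_mul_cancel₀ _ (pow_ne_zero 2 hβ.ne'), sq_abs]
      have hAcb : A * (1 + t*(Real.cosh (s*β) - 1)) ≤ A * Real.cosh (s*x) :=
        mul_le_mul_of_nonpos_left hcb0 hAneg.le
      have hf0 : 0 < A + (κ + δ*μ)/δ^2 := by
        rw [hA]
        have e : -κ/(δ^2*Real.cosh (s*β)) + (κ + δ*μ)/δ^2
            = ((κ + δ*μ)*Real.cosh (s*β) - κ)/(δ^2*Real.cosh (s*β)) := by
          field_simp; ring
        rw [e]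
        apply div_pos ?_ (by positivity)
        nlinarith [mul_lt_mul_of_pos_left hch hκ,
          mul_le_mul_of_nonneg_left hch.le (mul_nonneg hδ.le hμ)]
      have hfb : 0 < A*Real.cosh (s*β) + (κ/δ)*β^2 + (κ + δ*μ)/δ^2 - lam*β^2 := by
        rw [hAch]
        have e : -κ/δ^2 + (κ/δ)*β^2 + (κ + δ*μ)/δ^2 - lam*β^2 = ((κ - δ*lam)*β^2 + μ)/δ := by
          field_simp; ring
        rw [e]
        exact div_pos hc hδ
      have hident : A * (1 + t*(Real.cosh (s*β) - 1)) + (κ/δ)*x^2 + (κ + δ*μ)/δ^2 - lam*x^2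
          = (1-t)*(A + (κ + δ*μ)/δ^2)
            + t*(A*Real.cosh (s*β) + (κ/δ)*β^2 + (κ + δ*μ)/δ^2 - lam*β^2) := by
        linear_combination (lam - κ/δ) * htx
      rcases le_total (A + (κ + δ*μ)/δ^2)
          (A*Real.cosh (s*β) + (κ/δ)*β^2 + (κ + δ*μ)/δ^2 - lam*β^2) with hmm | hmm
      · nlinarith [mul_nonneg ht0 (sub_nonneg.mpr hmm)]
      · nlinarith [mul_nonneg (sub_nonneg.mpr ht1) (sub_nonneg.mpr hmm)]
  have heq' : Real.tanh (s*β) = s*β - δ^2/(κ*s) := by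
    rw [heq]
    field_simp
    linear_combination (-κ*β)*hs2
  -- the parameter equivalence
  have piff : (0 < (κ - δ*lam)*β^2 + μ) ↔
      (δ*lam - κ < 0 ∨ (δ*lam - κ = 0 ∧ 0 < μ) ∨
        (0 < δ*lam - κ ∧
          Real.tanh (Real.sqrt (2*δ*μ/(δ*lam - κ))) <
            Real.sqrt (2*δ*μ/(δ*lam - κ)) - δ^2/(κ*s))) := by
    rcases lt_trichotomy (δ*lam - κ) 0 with hd | hd | hd
    · constructor
      · intro _; exact Or.inl hd
      · intro _
        have : 0 < (κ - δ*lam)*β^2 := mul_pos (by linarith) (by positivity)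
        linarith
    · constructor
      · intro h
        refine Or.inr (Or.inl ⟨hd, ?_⟩)
        have : κ - δ*lam = 0 := by linarith
        rw [this] at h; linarith
      · rintro (h | ⟨_, h⟩ | ⟨h, _⟩)
        · linarith
        · have : κ - δ*lam = 0 := by linarith
          rw [this]; linarith
        · linarith
    · -- positive case
      set b' := Real.sqrt (μ/(δ*lam - κ)) with hb'def
      have hb'0 : 0 ≤ b' := Real.sqrt_nonneg _
      have hsb : Real.sqrt (2*δ*μ/(δ*lam - κ)) = s * b' := by
        rw [show 2*δ*μ/(δ*lam - κ) = (2*δ)*(μ/(δ*lam - κ)) by ring,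
          Real.sqrt_mul h2δ.le, hb'def]
      have hF : ∀ p q : ℝ, 0 ≤ p → p < q →
          s*p - Real.tanh (s*p) < s*q - Real.tanh (s*q) := by
        intro p q hp hpq
        have := myTanhGap (a := s*p) (b := s*q) (by positivity) (by nlinarith)
        linarith
      have hiff1 : β < b' ↔ Real.tanh (s*b') < s*b' - δ^2/(κ*s) := by
        constructor
        · intro h
          have := hF β b' hβ.le h
          rw [heq'] at this
          linarith
        · intro h
          by_contra hge
          push_neg at hge
          rcases eq_or_lt_of_le hge with he | hlt
          · rw [he] at h; rw [heq'] at h; linarith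
          · have := hF b' β hb'0 hlt
            rw [heq'] at this
            linarith
      have hiff2 : β < b' ↔ 0 < (κ - δ*lam)*β^2 + μ := by
        rw [hb'def, Real.lt_sqrt hβ.le, lt_div_iff₀ hd]
        constructor <;> intro <;> nlinarith
      constructor
      · intro h
        refine Or.inr (Or.inr ⟨hd, ?_⟩)
        rw [hsb]
        exact hiff1.mp (hiff2.mpr h)
      · rintro (h | ⟨h, _⟩ | ⟨_, h⟩)
        · linarith
        · linarith
        · rw [hsb] at h
          exact hiff2.mp (hiff1.mpr h)
  refine ⟨hkey.trans piff, ?_⟩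
  -- part 2
  intro hP
  have hfβ : 0 < (κ/δ)*β^2 + μ/δ - lam*β^2 := by
    have := hP β hβabs; rw [huβ] at this; linarith
  have hD0' : (2*lam*β - 1)^2 < 1 + 4*lam*((κ/δ)*β^2 + μ/δ - β) := by
    nlinarith [mul_pos hlam hfβ]
  have hD0 : 0 ≤ 1 + 4*lam*((κ/δ)*β^2 + μ/δ - β) := le_trans (sq_nonneg _) hD0'.le
  set r := Real.sqrt (1 + 4*lam*((κ/δ)*β^2 + μ/δ - β)) with hrdef
  have hrD : r^2 = 1 + 4*lam*((κ/δ)*β^2 + μ/δ - β) := Real.sq_sqrt hD0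
  have hrabs : |2*lam*β - 1| < r := by
    have := Real.sqrt_lt_sqrt (sq_nonneg (2*lam*β - 1)) hD0'
    rwa [Real.sqrt_sq_eq_abs] at this
  obtain ⟨hr1, hr2'⟩ := abs_lt.mp hrabs
  have hrpos : 0 < r := lt_of_le_of_lt (abs_nonneg _) hrabs
  set α := (1+r)/(2*lam) with hαdef
  have hαβ : β < α := by
    rw [hαdef, lt_div_iff₀ (by positivity)]; linarith
  have hαpos : 0 < α := hβ.trans hαβ
  have hval : ∀ y : ℝ, β < y →
      (u y = lam*y^2 ↔ y - β + ((κ/δ)*β^2 + μ/δ) = lam*y^2) := by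
    intro y hy
    have hypos : 0 < y := hβ.trans hy
    rw [hu y, if_neg (by rw [abs_of_pos hypos]; exact not_le.mpr hy), abs_of_pos hypos, hAch]
    have e : -κ/δ^2 + (κ/δ)*β^2 + (κ + δ*μ)/δ^2 = (κ/δ)*β^2 + μ/δ := by
      field_simp; ring
    rw [e]
  have hroot : u α = lam*α^2 := by
    have hrD' : δ*(r^2) = δ + 4*lam*(κ*β^2 + μ) - 4*lam*δ*β := by
      rw [hrD]; field_simp; ring
    rw [hval α hαβ, hαdef]
    field_simp
    linear_combination (-1)*hrD'
  have huniq : ∀ y : ℝ, β < y → u y = lam*y^2 → y = α := by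
    intro y hy1 hy2
    rw [hval y hy1] at hy2
    have hfact : (2*lam*y - 1 - r)*(2*lam*y - 1 + r) = 0 := by
      linear_combination (-4*lam)*hy2 - hrD
    rcases mul_eq_zero.mp hfact with h | h
    · rw [hαdef]; field_simp; linarith
    · exfalso; nlinarith [mul_pos hlam (sub_pos.mpr hy1)]
  have hαhalf : 1/(2*lam) < α := by
    rw [hαdef]
    exact (div_lt_div_iff_of_pos_right (by positivity)).mpr (by linarith)
  refine ⟨⟨α, ⟨hαβ, hroot⟩, fun y hy => huniq y hy.1 hy.2⟩, ?_⟩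
  intro y hy1 hy2
  rw [huniq y hy1 hy2]
  exact hαhalf
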